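/- In a finite-dimensional sequential product space, if a and b are effects with b & a = 0, then b & ⌈a⌉ = 0, where ⌈a⌉ is the least sharp effect above a. -/

import Mathlib

open scoped BigOperators

/-- A sequential product space: an order unit space `(V, ≤, unit)` with a binary
operation `seq` on its effects satisfying axioms (S1)-(S7). -/
structure SPS (V : Type*) [NormedAddCommGroup V] [NormedSpace ℝ V] [PartialOrder V] where
  unit : V
  seq : V → V → V
  /-- The effects: elements `a` with `0 ≤ a ≤ unit`. -/
  Eff : V → Prop
  eff_iff : ∀ a : V, Eff a ↔ 0 ≤ a ∧ a ≤ unit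
  eff_unit : Eff unit
  /-- `V` is an ordered vector space. -/
  add_le_add_right' : ∀ a b c : V, a ≤ b → a + c ≤ b + c
  smul_le_smul' : ∀ (r : ℝ) (a b : V), 0 ≤ r → a ≤ b → r • a ≤ r • b
  /-- `unit` is a strong unit. -/
  strong : ∀ a : V, ∃ n : ℕ, -((n : ℝ) • unit) ≤ a ∧ a ≤ (n : ℝ) • unit
  /-- Archimedean property. -/
  arch : ∀ a : V, (∀ n : ℕ, a ≤ ((n : ℝ) + 1)⁻¹ • unit) → a ≤ 0
  /-- The norm of `V` is the order-unit norm. -/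
  norm_def : ∀ a : V, ‖a‖ = sInf {r : ℝ | 0 ≤ r ∧ -(r • unit) ≤ a ∧ a ≤ r • unit}
  seq_eff : ∀ a b : V, Eff a → Eff b → Eff (seq a b)
  /-- (S1) additivity in the second argument. -/
  s1 : ∀ a b c : V, Eff a → Eff b → Eff c → Eff (b + c) →
      seq a (b + c) = seq a b + seq a c
  /-- (S2) norm-continuity in the first argument. -/
  s2 : ∀ b : V, Eff b → ContinuousOn (fun a => seq a b) {a : V | Eff a}
  /-- (S3) unitality. -/
  s3 : ∀ a : V, Eff a → seq unit a = a
  /-- (S4) orthogonal effects are compatible. -/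
  s4 : ∀ a b : V, Eff a → Eff b → seq a b = 0 → seq b a = 0
  /-- (S5) associativity for compatible effects. -/
  s5 : ∀ a b c : V, Eff a → Eff b → Eff c → seq a b = seq b a →
      seq a (seq b c) = seq (seq a b) c
  /-- (S6) compatibility is preserved by complements. -/
  s6a : ∀ a b : V, Eff a → Eff b → seq a b = seq b a →
      seq a (unit - b) = seq (unit - b) a
  /-- (S6) compatibility is preserved by sums. -/
  s6b : ∀ a b c : V, Eff a → Eff b → Eff c → Eff (b + c) →
      seq a b = seq b a → seq a c = seq c a → seq a (b + c) = seq (b + c) a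
  /-- (S7) compatibility is preserved by the product. -/
  s7 : ∀ a b c : V, Eff a → Eff b → Eff c →
      seq a b = seq b a → seq a c = seq c a → seq a (seq b c) = seq (seq b c) a

namespace SPS

variable {V : Type*} [NormedAddCommGroup V] [NormedSpace ℝ V] [PartialOrder V]

/-- `a` and `b` are compatible: `a & b = b & a`. -/
def Compat (S : SPS V) (a b : V) : Prop := S.seq a b = S.seq b a

/-- An effect `p` is sharp when the only effect below both `p` and `unit - p` is `0`. -/
def Sharp (S : SPS V) (p : V) : Prop :=
  S.Eff p ∧ ∀ b : V, S.Eff b → b ≤ p → b ≤ S.unit - p → b = 0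

/-- An effect `p` is sharp (idempotence formulation): `p & p = p`. -/
def SharpI (S : SPS V) (p : V) : Prop := S.Eff p ∧ S.seq p p = p

/-- An effect `p` is atomic when `p ≠ 0` and every effect below `p` is a multiple of `p`. -/
def Atomic (S : SPS V) (p : V) : Prop :=
  S.Eff p ∧ p ≠ 0 ∧ ∀ a : V, S.Eff a → a ≤ p → ∃ t : ℝ, 0 ≤ t ∧ t ≤ 1 ∧ a = t • p

/-- `c` is the least sharp effect above `a` (the ceiling `⌈a⌉`). -/
def IsCeil (S : SPS V) (a c : V) : Prop :=
  S.SharpI c ∧ a ≤ c ∧ ∀ d : V, S.SharpI d → a ≤ d → c ≤ d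

/-- `f` is the greatest sharp effect below `a` (the floor `⌊a⌋`). -/
def IsFloor (S : SPS V) (a f : V) : Prop :=
  S.SharpI f ∧ f ≤ a ∧ ∀ d : V, S.SharpI d → d ≤ a → d ≤ f

end SPS

section SeqCeilProof

open Filter

namespace SPS

variable {V : Type*} [NormedAddCommGroup V] [NormedSpace ℝ V] [PartialOrder V]
variable (S : SPS V)
include S

/-! ### Order toolkit -/

lemma add_le_add_left'' {a b : V} (c : V) (h : a ≤ b) : c + a ≤ c + b := by
  have := S.add_le_add_right' a b c h; simpa [add_comm] using this

lemma sub_nonneg_of_le {a b : V} (h : a ≤ b) : 0 ≤ b - a := by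
  have := S.add_le_add_right' a b (-a) h; simpa [sub_eq_add_neg] using this

lemma le_of_sub_nonneg {a b : V} (h : 0 ≤ b - a) : a ≤ b := by
  have := S.add_le_add_right' 0 (b - a) a h; simpa using this

lemma smul_nonneg'' {r : ℝ} {a : V} (hr : 0 ≤ r) (ha : 0 ≤ a) : 0 ≤ r • a := by
  have := S.smul_le_smul' r 0 a hr ha; simpa using this

lemma unit_nonneg : (0 : V) ≤ S.unit := ((S.eff_iff _).1 S.eff_unit).1

lemma smul_unit_mono {s r : ℝ} (h : s ≤ r) : s • S.unit ≤ r • S.unit := by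
  apply S.le_of_sub_nonneg
  rw [← sub_smul]
  exact S.smul_nonneg'' (by linarith) S.unit_nonneg

lemma neg_le_neg' {a b : V} (h : a ≤ b) : -b ≤ -a := by
  apply S.le_of_sub_nonneg
  have := S.sub_nonneg_of_le h
  rwa [neg_sub_neg]

lemma neg_smul_unit_nonpos {r : ℝ} (hr : 0 ≤ r) : -(r • S.unit) ≤ 0 := by
  have := S.neg_le_neg' (S.smul_nonneg'' hr S.unit_nonneg)
  simpa using this

lemma le_of_forall_eps {a b : V} (h : ∀ ε : ℝ, 0 < ε → a ≤ b + ε • S.unit) : a ≤ b := by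
  have h2 : a - b ≤ 0 := by
    apply S.arch
    intro n
    have hε : (0:ℝ) < ((n:ℝ) + 1)⁻¹ := by positivity
    have h3 := h _ hε
    have := S.add_le_add_right' a (b + ((n:ℝ)+1)⁻¹ • S.unit) (-b) h3
    calc a - b = a + -b := by rw [sub_eq_add_neg]
    _ ≤ b + ((n:ℝ)+1)⁻¹ • S.unit + -b := this
    _ = ((n:ℝ)+1)⁻¹ • S.unit := by abel
  have := S.add_le_add_right' (a - b) 0 b h2
  simpa using this

lemma normSet_nonempty (y : V) :
    Set.Nonempty {r : ℝ | 0 ≤ r ∧ -(r • S.unit) ≤ y ∧ y ≤ r • S.unit} := by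
  obtain ⟨n, h1, h2⟩ := S.strong y
  exact ⟨n, n.cast_nonneg, h1, h2⟩

lemma normSet_bdd (y : V) :
    BddBelow {r : ℝ | 0 ≤ r ∧ -(r • S.unit) ≤ y ∧ y ≤ r • S.unit} :=
  ⟨0, fun _ hr => hr.1⟩

lemma norm_le_of {y : V} {r : ℝ} (h0 : 0 ≤ r) (h1 : -(r • S.unit) ≤ y)
    (h2 : y ≤ r • S.unit) : ‖y‖ ≤ r := by
  rw [S.norm_def]
  exact csInf_le (S.normSet_bdd y) ⟨h0, h1, h2⟩

lemma bounds_of_norm_lt {y : V} {r : ℝ} (h : ‖y‖ < r) :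
    -(r • S.unit) ≤ y ∧ y ≤ r • S.unit := by
  rw [S.norm_def] at h
  obtain ⟨s, hs, hsr⟩ := exists_lt_of_csInf_lt (S.normSet_nonempty y) h
  refine ⟨le_trans ?_ hs.2.1, le_trans hs.2.2 (S.smul_unit_mono hsr.le)⟩
  exact S.neg_le_neg' (S.smul_unit_mono hsr.le)

lemma nonneg_of_tendsto {f : ℕ → V} {l : V}
    (hf : Tendsto f atTop (nhds l)) (h : ∀ n, 0 ≤ f n) : 0 ≤ l := by
  have key : ∀ ε : ℝ, 0 < ε → -l ≤ 0 + ε • S.unit := by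
    intro ε hε
    obtain ⟨N, hN⟩ := NormedAddCommGroup.tendsto_atTop.1 hf ε hε
    have hb := (S.bounds_of_norm_lt (hN N le_rfl)).2
    have h1 : -l ≤ f N - l := by
      have := S.add_le_add_right' 0 (f N) (-l) (h N)
      simpa [sub_eq_add_neg] using this
    simpa using le_trans h1 hb
  have h2 : -l ≤ 0 := S.le_of_forall_eps key
  have := S.neg_le_neg' h2
  simpa using this

lemma le_of_tendsto_of_le {f : ℕ → V} {l b : V}
    (hf : Tendsto f atTop (nhds l)) (h : ∀ n, f n ≤ b) : l ≤ b := by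
  have h0 : 0 ≤ b - l :=
    S.nonneg_of_tendsto (Filter.Tendsto.const_sub b hf)
      (fun n => S.sub_nonneg_of_le (h n))
  exact S.le_of_sub_nonneg h0

lemma ge_of_tendsto_of_ge {f : ℕ → V} {l a : V}
    (hf : Tendsto f atTop (nhds l)) (h : ∀ n, a ≤ f n) : a ≤ l := by
  have h0 : 0 ≤ l - a :=
    S.nonneg_of_tendsto (hf.sub_const a) (fun n => S.sub_nonneg_of_le (h n))
  exact S.le_of_sub_nonneg h0

/-! ### Effect lemmas -/

lemma eff_nonneg {x : V} (h : S.Eff x) : 0 ≤ x := ((S.eff_iff x).1 h).1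

lemma eff_le_unit {x : V} (h : S.Eff x) : x ≤ S.unit := ((S.eff_iff x).1 h).2

lemma eff_zero : S.Eff 0 := (S.eff_iff 0).2 ⟨le_rfl, S.unit_nonneg⟩

lemma eff_of_le {u v : V} (hv : S.Eff v) (h0 : 0 ≤ u) (h : u ≤ v) : S.Eff u :=
  (S.eff_iff u).2 ⟨h0, le_trans h (S.eff_le_unit hv)⟩

lemma eff_sub {u v : V} (hu : S.Eff u) (hv : S.Eff v) (h : u ≤ v) :
    S.Eff (v - u) := by
  refine (S.eff_iff _).2 ⟨S.sub_nonneg_of_le h, ?_⟩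
  have h1 : v - u ≤ v - 0 := by
    have := S.add_le_add_left'' v (S.neg_le_neg' (S.eff_nonneg hu))
    simpa [sub_eq_add_neg] using this
  have h1' : v - u ≤ v := by simpa using h1
  exact le_trans h1' (S.eff_le_unit hv)

lemma eff_compl {u : V} (hu : S.Eff u) : S.Eff (S.unit - u) :=
  S.eff_sub hu S.eff_unit (S.eff_le_unit hu)

lemma eff_smul' {t : ℝ} {u : V} (h0 : 0 ≤ t) (h1 : t ≤ 1) (hu : S.Eff u) :
    S.Eff (t • u) := by
  refine (S.eff_iff _).2 ⟨S.smul_nonneg'' h0 (S.eff_nonneg hu), ?_⟩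
  calc t • u ≤ t • S.unit := S.smul_le_smul' t u S.unit h0 (S.eff_le_unit hu)
  _ ≤ (1:ℝ) • S.unit := S.smul_unit_mono h1
  _ = S.unit := one_smul _ _

/-! ### Basic properties of the sequential product -/

lemma seq_zero_right {x : V} (hx : S.Eff x) : S.seq x 0 = 0 := by
  have h := S.s1 x 0 0 hx S.eff_zero S.eff_zero (by simpa using S.eff_zero)
  have h2 : S.seq x 0 + S.seq x 0 = S.seq x 0 + 0 := by
    rw [add_zero]
    simpa using h.symm
  exact add_left_cancel h2

lemma seq_zero_left {x : V} (hx : S.Eff x) : S.seq 0 x = 0 :=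
  S.s4 x 0 hx S.eff_zero (S.seq_zero_right hx)

lemma seq_unit_right {x : V} (hx : S.Eff x) : S.seq x S.unit = x := by
  have hcompat := S.s6a x 0 hx S.eff_zero
    (by rw [S.seq_zero_right hx, S.seq_zero_left hx])
  rw [sub_zero] at hcompat
  rw [hcompat, S.s3 x hx]

lemma seq_mono2 {x u v : V} (hx : S.Eff x) (hu : S.Eff u) (hv : S.Eff v)
    (h : u ≤ v) : S.seq x u ≤ S.seq x v := by
  have hd : S.Eff (v - u) := S.eff_sub hu hv h
  have hsum : S.seq x v = S.seq x u + S.seq x (v - u) := by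
    have := S.s1 x u (v - u) hx hu hd (by simpa using hv)
    simpa using this
  rw [hsum]
  have h0 : 0 ≤ S.seq x (v - u) := S.eff_nonneg (S.seq_eff _ _ hx hd)
  have := S.add_le_add_left'' (S.seq x u) h0
  simpa using this

lemma seq_le_fst {x u : V} (hx : S.Eff x) (hu : S.Eff u) : S.seq x u ≤ x := by
  have := S.seq_mono2 hx hu S.eff_unit (S.eff_le_unit hu)
  rwa [S.seq_unit_right hx] at this

/-! ### Homogeneity of the sequential product in its second argument -/

lemma seq_nsmul {x w : V} (hx : S.Eff x) (hw : S.Eff w) :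
    ∀ m : ℕ, (m : ℝ) • w ≤ S.unit → S.seq x ((m : ℝ) • w) = (m : ℝ) • S.seq x w := by
  intro m
  induction m with
  | zero => intro _; simp [S.seq_zero_right hx]
  | succ m ih =>
    intro hm
    have hw0 : 0 ≤ w := S.eff_nonneg hw
    have hcast : ((m + 1 : ℕ) : ℝ) = (m : ℝ) + 1 := by push_cast; ring
    have hmw_le : (m : ℝ) • w ≤ ((m : ℝ) + 1) • w := by
      apply S.le_of_sub_nonneg
      have hsub : ((m : ℝ) + 1) • w - (m : ℝ) • w = w := by
        rw [← sub_smul]; simp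
      rw [hsub]; exact hw0
    rw [hcast] at hm
    have hmw1 : (m : ℝ) • w ≤ S.unit := le_trans hmw_le hm
    have heffm : S.Eff ((m : ℝ) • w) :=
      (S.eff_iff _).2 ⟨S.smul_nonneg'' (by positivity) hw0, hmw1⟩
    have heffsum : S.Eff ((m : ℝ) • w + w) := by
      rw [show (m : ℝ) • w + w = ((m : ℝ) + 1) • w by rw [add_smul, one_smul]]
      exact (S.eff_iff _).2 ⟨S.smul_nonneg'' (by positivity) hw0, hm⟩
    have hsplit : ((m : ℝ) + 1) • w = (m : ℝ) • w + w := by rw [add_smul, one_smul]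
    rw [hcast, hsplit, S.s1 x _ _ hx heffm hw heffsum, ih hmw1, add_smul, one_smul]

lemma seq_rat_smul {x u : V} (hx : S.Eff x) (hu : S.Eff u) (k m : ℕ)
    (hm : 0 < m) (hk : k ≤ m) :
    S.seq x (((k : ℝ) / (m : ℝ)) • u) = ((k : ℝ) / (m : ℝ)) • S.seq x u := by
  have hm0 : (0 : ℝ) < m := by exact_mod_cast hm
  set w := ((m : ℝ))⁻¹ • u with hw_def
  have hw_eff : S.Eff w :=
    S.eff_smul' (by positivity) (by
      rw [inv_le_one_iff₀]; right; exact_mod_cast hm) hu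
  have hmw : (m : ℝ) • w = u := by
    rw [hw_def, smul_smul, mul_inv_cancel₀ hm0.ne', one_smul]
  have h1 : (m : ℝ) • w ≤ S.unit := by rw [hmw]; exact S.eff_le_unit hu
  have h2 : (k : ℝ) • w ≤ S.unit := by
    refine le_trans ?_ h1
    apply S.le_of_sub_nonneg
    rw [← sub_smul]
    exact S.smul_nonneg'' (by
      have : (k : ℝ) ≤ (m : ℝ) := by exact_mod_cast hk
      linarith) (S.eff_nonneg hw_eff)
  have e1 : S.seq x u = (m : ℝ) • S.seq x w := by
    rw [← hmw, S.seq_nsmul hx hw_eff m h1]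
  have e2 : S.seq x ((k : ℝ) • w) = (k : ℝ) • S.seq x w :=
    S.seq_nsmul hx hw_eff k h2
  have e3 : ((k : ℝ) / (m : ℝ)) • u = (k : ℝ) • w := by
    rw [hw_def, smul_smul, div_eq_mul_inv]
  rw [e3, e2, e1, smul_smul]
  congr 1
  field_simp

omit [NormedAddCommGroup V] [NormedSpace ℝ V] [PartialOrder V] S in
lemma rat_to_frac (q : ℚ) (h0 : 0 ≤ q) (h1 : (q : ℝ) ≤ 1) :
    ∃ k m : ℕ, 0 < m ∧ k ≤ m ∧ ((k : ℝ) / (m : ℝ)) = (q : ℝ) := by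
  have hnn : 0 ≤ q.num := Rat.num_nonneg.2 h0
  have hnatZ : (q.num.toNat : ℤ) = q.num := Int.toNat_of_nonneg hnn
  have hnumR : ((q.num.toNat : ℝ)) = ((q.num : ℤ) : ℝ) := by exact_mod_cast hnatZ
  have heq : ((q.num.toNat : ℝ)) / (q.den : ℝ) = (q : ℝ) := by
    rw [hnumR, Rat.cast_def]
  have hden : (0 : ℝ) < (q.den : ℝ) := by exact_mod_cast q.pos
  have hk : q.num.toNat ≤ q.den := by
    have h2 : ((q.num.toNat : ℝ)) ≤ (q.den : ℝ) := by
      rw [← div_le_one hden, heq]; exact h1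
    exact_mod_cast h2
  exact ⟨_, _, q.pos, hk, heq⟩

omit [NormedAddCommGroup V] [NormedSpace ℝ V] [PartialOrder V] S in
lemma exists_frac_above {t ε : ℝ} (h0 : 0 ≤ t) (h1 : t ≤ 1) (hε : 0 < ε) :
    ∃ k m : ℕ, 0 < m ∧ k ≤ m ∧ t ≤ (k : ℝ) / m ∧ (k : ℝ) / m - t < ε := by
  by_cases hcase : 1 - t < ε
  · exact ⟨1, 1, one_pos, le_rfl, by simpa using h1, by simpa using hcase⟩
  · have ht1 : t + ε ≤ 1 := by linarith
    obtain ⟨q, hq1, hq2⟩ := exists_rat_btwn (lt_add_of_pos_right t hε)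
    have hq0 : (0 : ℝ) ≤ (q : ℝ) := le_trans h0 hq1.le
    have hqle1 : (q : ℝ) ≤ 1 := le_trans hq2.le ht1
    obtain ⟨k, m, hm, hk, heq⟩ := rat_to_frac q (by exact_mod_cast hq0) hqle1
    exact ⟨k, m, hm, hk, by rw [heq]; exact hq1.le, by rw [heq]; linarith⟩

omit [NormedAddCommGroup V] [NormedSpace ℝ V] [PartialOrder V] S in
lemma exists_frac_below {t ε : ℝ} (h0 : 0 ≤ t) (h1 : t ≤ 1) (hε : 0 < ε) :
    ∃ k m : ℕ, 0 < m ∧ k ≤ m ∧ (k : ℝ) / m ≤ t ∧ t - (k : ℝ) / m < ε := by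
  by_cases hcase : t < ε
  · exact ⟨0, 1, one_pos, Nat.zero_le _, by simpa using h0, by simpa using hcase⟩
  · obtain ⟨q, hq1, hq2⟩ := exists_rat_btwn (show t - ε < t by linarith)
    have hq0 : (0 : ℝ) ≤ (q : ℝ) := by linarith
    have hqle1 : (q : ℝ) ≤ 1 := by linarith
    obtain ⟨k, m, hm, hk, heq⟩ := rat_to_frac q (by exact_mod_cast hq0) hqle1
    exact ⟨k, m, hm, hk, by rw [heq]; exact hq2.le, by rw [heq]; linarith⟩

lemma seq_smul {x u : V} (hx : S.Eff x) (hu : S.Eff u) {t : ℝ}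
    (h0 : 0 ≤ t) (h1 : t ≤ 1) : S.seq x (t • u) = t • S.seq x u := by
  have hz_eff : S.Eff (S.seq x u) := S.seq_eff x u hx hu
  have hz_le : S.seq x u ≤ S.unit := S.eff_le_unit hz_eff
  have hz0 : 0 ≤ S.seq x u := S.eff_nonneg hz_eff
  have htu_eff : S.Eff (t • u) := S.eff_smul' h0 h1 hu
  apply le_antisymm
  · apply S.le_of_forall_eps
    intro ε hε
    obtain ⟨k, m, hm, hk, hle, hlt⟩ := exists_frac_above h0 h1 hε
    have hq0 : (0 : ℝ) ≤ (k : ℝ) / m := by positivity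
    have hq1 : (k : ℝ) / m ≤ 1 := by
      rw [div_le_one (by exact_mod_cast hm)]; exact_mod_cast hk
    have hqu_eff : S.Eff (((k : ℝ) / m) • u) := S.eff_smul' hq0 hq1 hu
    have hmono : S.seq x (t • u) ≤ S.seq x (((k : ℝ) / m) • u) := by
      apply S.seq_mono2 hx htu_eff hqu_eff
      apply S.le_of_sub_nonneg
      rw [← sub_smul]
      exact S.smul_nonneg'' (by linarith) (S.eff_nonneg hu)
    rw [S.seq_rat_smul hx hu k m hm hk] at hmono
    refine le_trans hmono ?_
    rw [show (k : ℝ) / m = t + ((k : ℝ) / m - t) by ring, add_smul]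
    apply S.add_le_add_left''
    calc ((k : ℝ) / m - t) • S.seq x u
        ≤ ((k : ℝ) / m - t) • S.unit := S.smul_le_smul' _ _ _ (by linarith) hz_le
    _ ≤ ε • S.unit := S.smul_unit_mono (by linarith)
  · apply S.le_of_forall_eps
    intro ε hε
    obtain ⟨k, m, hm, hk, hle, hlt⟩ := exists_frac_below h0 h1 hε
    have hq0 : (0 : ℝ) ≤ (k : ℝ) / m := by positivity
    have hq1 : (k : ℝ) / m ≤ 1 := by
      rw [div_le_one (by exact_mod_cast hm)]; exact_mod_cast hk
    have hqu_eff : S.Eff (((k : ℝ) / m) • u) := S.eff_smul' hq0 hq1 hu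
    have hmono : S.seq x (((k : ℝ) / m) • u) ≤ S.seq x (t • u) := by
      apply S.seq_mono2 hx hqu_eff htu_eff
      apply S.le_of_sub_nonneg
      rw [← sub_smul]
      exact S.smul_nonneg'' (by linarith) (S.eff_nonneg hu)
    rw [S.seq_rat_smul hx hu k m hm hk] at hmono
    have hstep : t • S.seq x u ≤ ((k : ℝ) / m) • S.seq x u + ε • S.unit := by
      rw [show t = (k : ℝ) / m + (t - (k : ℝ) / m) by ring, add_smul]
      apply S.add_le_add_left''
      calc (t - (k : ℝ) / m) • S.seq x u
          ≤ (t - (k : ℝ) / m) • S.unit := S.smul_le_smul' _ _ _ (by linarith) hz_le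
      _ ≤ ε • S.unit := S.smul_unit_mono (by linarith)
    refine le_trans hstep ?_
    exact S.add_le_add_right' _ _ _ hmono

/-! ### Lipschitz continuity in the second argument -/

lemma seq_le_shift {x u v : V} (hx : S.Eff x) (hu : S.Eff u) (hv : S.Eff v)
    {r : ℝ} (hr : 0 < r) (huv : u ≤ v + r • S.unit) :
    S.seq x u ≤ S.seq x v + r • S.unit := by
  set s : ℝ := (1 + r)⁻¹ with hs_def
  have hr1 : (0 : ℝ) < 1 + r := by linarith
  have hs0 : 0 < s := by positivity
  have hs1 : s ≤ 1 := by
    rw [hs_def, inv_le_one_iff₀]; right; linarith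
  have hsr0 : 0 ≤ s * r := by positivity
  have hsr1 : s * r ≤ 1 := by
    rw [hs_def]
    rw [inv_mul_le_iff₀ hr1]
    linarith
  have hsu : S.Eff (s • u) := S.eff_smul' hs0.le hs1 hu
  have hsv : S.Eff (s • v) := S.eff_smul' hs0.le hs1 hv
  have hsr_eff : S.Eff ((s * r) • S.unit) := S.eff_smul' hsr0 hsr1 S.eff_unit
  have hw_eff : S.Eff (s • v + (s * r) • S.unit) := by
    refine (S.eff_iff _).2 ⟨?_, ?_⟩
    · calc (0 : V) = 0 + 0 := by rw [add_zero]
      _ ≤ s • v + (s * r) • S.unit :=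
        le_trans (S.add_le_add_right' 0 (s • v) 0 (S.eff_nonneg hsv))
          (S.add_le_add_left'' _ (S.eff_nonneg hsr_eff))
    · have hb : s • v + (s * r) • S.unit ≤ s • S.unit + (s * r) • S.unit := by
        exact S.add_le_add_right' _ _ _ (S.smul_le_smul' s v S.unit hs0.le (S.eff_le_unit hv))
      refine le_trans hb ?_
      rw [← add_smul]
      have : s + s * r = 1 := by
        rw [hs_def]; field_simp
      rw [this, one_smul]
  have hle : s • u ≤ s • v + (s * r) • S.unit := by
    have := S.smul_le_smul' s u (v + r • S.unit) hs0.le huv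
    rwa [smul_add, smul_smul] at this
  have hmain := S.seq_mono2 hx hsu hw_eff hle
  rw [S.seq_smul hx hu hs0.le hs1] at hmain
  rw [S.s1 x (s • v) ((s * r) • S.unit) hx hsv hsr_eff hw_eff,
    S.seq_smul hx hv hs0.le hs1, S.seq_smul hx S.eff_unit hsr0 hsr1,
    S.seq_unit_right hx] at hmain
  have hx_le : (s * r) • x ≤ (s * r) • S.unit :=
    S.smul_le_smul' _ _ _ hsr0 (S.eff_le_unit hx)
  have hmain2 : s • S.seq x u ≤ s • S.seq x v + (s * r) • S.unit :=
    le_trans hmain (S.add_le_add_left'' _ hx_le)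
  have hfin := S.smul_le_smul' (1 + r) _ _ hr1.le hmain2
  rw [smul_add, smul_smul, smul_smul, smul_smul] at hfin
  have e1 : (1 + r) * s = 1 := by rw [hs_def]; field_simp
  have e2 : (1 + r) * (s * r) = r := by rw [hs_def]; field_simp
  rwa [e1, e2, one_smul, one_smul] at hfin

lemma seq_lip {x u v : V} (hx : S.Eff x) (hu : S.Eff u) (hv : S.Eff v)
    {r : ℝ} (hr : 0 < r) (h : ‖u - v‖ < r) :
    ‖S.seq x u - S.seq x v‖ ≤ r := by
  obtain ⟨hb1, hb2⟩ := S.bounds_of_norm_lt h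
  have huv : u ≤ v + r • S.unit := by
    have := S.add_le_add_right' (u - v) (r • S.unit) v hb2
    simpa [sub_add_cancel, add_comm] using this
  have hvu : v ≤ u + r • S.unit := by
    have h3 : v - u ≤ r • S.unit := by
      have := S.neg_le_neg' hb1
      simpa [neg_sub] using this
    have := S.add_le_add_right' (v - u) (r • S.unit) u h3
    simpa [sub_add_cancel, add_comm] using this
  have k1 := S.seq_le_shift hx hu hv hr huv
  have k2 := S.seq_le_shift hx hv hu hr hvu
  apply S.norm_le_of hr.le
  · have := S.add_le_add_right' (S.seq x v) (S.seq x u + r • S.unit) (-(S.seq x u) - r • S.unit) k2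
    apply S.le_of_sub_nonneg
    have h4 : S.seq x u - S.seq x v - -(r • S.unit) = (S.seq x u + r • S.unit) + (-(S.seq x u) - r • S.unit) - (S.seq x v + (-(S.seq x u) - r • S.unit)) + (r • S.unit) - (r • S.unit) + (S.seq x u - S.seq x u) := by abel
    rw [h4]
    have h5 := S.sub_nonneg_of_le this
    calc (0 : V) ≤ (S.seq x u + r • S.unit + (-(S.seq x u) - r • S.unit)) - (S.seq x v + (-(S.seq x u) - r • S.unit)) := h5
    _ = (S.seq x u + r • S.unit) + (-(S.seq x u) - r • S.unit) - (S.seq x v + (-(S.seq x u) - r • S.unit)) + (r • S.unit) - (r • S.unit) + (S.seq x u - S.seq x u) := by abel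
  · have := S.add_le_add_right' (S.seq x u) (S.seq x v + r • S.unit) (-(S.seq x v)) k1
    have h6 := S.sub_nonneg_of_le this
    apply S.le_of_sub_nonneg
    calc (0 : V) ≤ (S.seq x v + r • S.unit) + -(S.seq x v) - (S.seq x u + -(S.seq x v)) := h6
    _ = r • S.unit - (S.seq x u - S.seq x v) := by abel

/-! ### Continuity -/

lemma seq_tendsto2 {x : V} {f : ℕ → V} {l : V} (hx : S.Eff x)
    (hf : ∀ n, S.Eff (f n)) (hl : S.Eff l) (h : Tendsto f atTop (nhds l)) :
    Tendsto (fun n => S.seq x (f n)) atTop (nhds (S.seq x l)) := by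
  rw [NormedAddCommGroup.tendsto_atTop] at h ⊢
  intro ε hε
  obtain ⟨N, hN⟩ := h (ε / 2) (by linarith)
  refine ⟨N, fun n hn => ?_⟩
  calc ‖S.seq x (f n) - S.seq x l‖ ≤ ε / 2 :=
    S.seq_lip hx (hf n) hl (by linarith) (hN n hn)
  _ < ε := by linarith

lemma seq_tendsto1 {y : V} {f : ℕ → V} {l : V} (hy : S.Eff y)
    (hf : ∀ n, S.Eff (f n)) (hl : S.Eff l) (h : Tendsto f atTop (nhds l)) :
    Tendsto (fun n => S.seq (f n) y) atTop (nhds (S.seq l y)) := by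
  have hc : ContinuousWithinAt (fun a => S.seq a y) {a : V | S.Eff a} l :=
    (S.s2 y hy) l hl
  have h' : Tendsto f atTop (nhdsWithin l {a : V | S.Eff a}) :=
    tendsto_nhdsWithin_of_tendsto_nhds_of_eventually_within f h
      (Filter.Eventually.of_forall hf)
  exact hc.tendsto.comp h'

/-! ### Iterated sequential powers -/

def iter (x : V) : ℕ → V
  | 0 => S.unit
  | n + 1 => S.seq x (iter x n)

lemma iter_succ (x : V) (n : ℕ) : S.iter x (n + 1) = S.seq x (S.iter x n) := rfl

lemma eff_iter {x : V} (hx : S.Eff x) : ∀ n, S.Eff (S.iter x n)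
  | 0 => S.eff_unit
  | n + 1 => S.seq_eff _ _ hx (eff_iter hx n)

lemma compat_iter {x y : V} (hx : S.Eff x) (hy : S.Eff y)
    (hxy : S.seq y x = S.seq x y) :
    ∀ n, S.seq y (S.iter x n) = S.seq (S.iter x n) y
  | 0 => by
    show S.seq y S.unit = S.seq S.unit y
    rw [S.seq_unit_right hy, S.s3 y hy]
  | n + 1 => by
    rw [S.iter_succ]
    exact S.s7 y x (S.iter x n) hy hx (S.eff_iter hx n) hxy (compat_iter hx hy hxy n)

/-! ### Idempotents are sharp -/

lemma sharp_of_idem {p x : V} (hp : S.Eff p) (hidem : S.seq p p = p)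
    (hx : S.Eff x) (h1 : x ≤ p) (h2 : x ≤ S.unit - p) : x = 0 := by
  have hpc : S.Eff (S.unit - p) := S.eff_compl hp
  have hcompl : S.seq p (S.unit - p) = S.seq (S.unit - p) p := S.s6a p p hp hp rfl
  have hsum : (S.unit - p) + p = S.unit := by abel
  have hzero : S.seq p (S.unit - p) = 0 := by
    have hu : S.Eff ((S.unit - p) + p) := by rw [hsum]; exact S.eff_unit
    have h3 := S.s1 p (S.unit - p) p hp hpc hp hu
    rw [hsum, S.seq_unit_right hp, hidem] at h3
    have h4 : S.seq p (S.unit - p) + p = 0 + p := by rw [zero_add]; exact h3.symm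
    exact add_right_cancel h4
  have hpx : S.seq p x = 0 := by
    refine le_antisymm ?_ (S.eff_nonneg (S.seq_eff _ _ hp hx))
    have := S.seq_mono2 hp hx hpc h2
    rwa [hzero] at this
  have hxp : S.seq x p = 0 := S.s4 p x hp hx hpx
  have hcx : S.seq (S.unit - p) x = 0 := by
    refine le_antisymm ?_ (S.eff_nonneg (S.seq_eff _ _ hpc hx))
    have := S.seq_mono2 hpc hx hp h1
    rwa [← hcompl, hzero] at this
  have hxc : S.seq x (S.unit - p) = 0 := S.s4 _ _ hpc hx hcx
  have hu : S.Eff ((S.unit - p) + p) := by rw [hsum]; exact S.eff_unit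
  have h5 := S.s1 x (S.unit - p) p hx hpc hp hu
  rw [hsum, S.seq_unit_right hx, hxc, hxp] at h5
  simpa using h5

end SPS
end SeqCeilProof

/-- if `b & a = 0` then `b & ⌈a⌉ = 0`. -/
theorem seq_ceil_eq_zero {V : Type*} [NormedAddCommGroup V] [NormedSpace ℝ V]
    [PartialOrder V] [FiniteDimensional ℝ V] (S : SPS V) (a b c : V)
    (ha : S.Eff a) (hb : S.Eff b) (h : S.seq b a = 0) (hc : S.IsCeil a c) :
    S.seq b c = 0 := by
  open Filter in
  obtain ⟨⟨hceff, hcidem⟩, hac, hcmin⟩ := hc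
  have hab : S.seq a b = 0 := S.s4 b a hb ha h
  set e := S.unit - b with he_def
  have he : S.Eff e := S.eff_compl hb
  have hcab : S.seq a b = S.seq b a := by rw [hab, h]
  have hcae : S.seq a e = S.seq e a := S.s6a a b ha hb hcab
  have hcbe : S.seq b e = S.seq e b := S.s6a b b hb hb rfl
  have hsum : b + e = S.unit := by rw [he_def]; abel
  have haea : S.seq a e = a := by
    have h1 := S.s1 a b e ha hb he (by rw [hsum]; exact S.eff_unit)
    rw [hsum, S.seq_unit_right ha, hab, zero_add] at h1
    exact h1.symm
  have hea : S.seq e a = a := by rw [← hcae, haea]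
  set E : ℕ → V := S.iter e with hE_def
  have hE0 : E 0 = S.unit := rfl
  have hEsucc : ∀ n, E (n + 1) = S.seq e (E n) := fun n => rfl
  have hEeff : ∀ n, S.Eff (E n) := S.eff_iter he
  have hE1 : E 1 = e := by rw [hEsucc, hE0, S.seq_unit_right he]
  have hanti : ∀ n, E (n + 1) ≤ E n := by
    intro n
    induction n with
    | zero => rw [hE1, hE0]; exact S.eff_le_unit he
    | succ n ih =>
      rw [hEsucc (n + 1), hEsucc n]
      exact S.seq_mono2 he (hEeff (n + 1)) (hEeff n) ih
  have hAnti : Antitone E := antitone_nat_of_succ_le hanti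
  have haE : ∀ n, a ≤ E n := by
    intro n
    induction n with
    | zero => rw [hE0]; exact S.eff_le_unit ha
    | succ n ih =>
      rw [hEsucc]
      calc a = S.seq e a := hea.symm
      _ ≤ S.seq e (E n) := S.seq_mono2 he ha (hEeff n) ih
  have hball : ∀ n, E n ∈ Metric.closedBall (0 : V) 1 := by
    intro n
    rw [Metric.mem_closedBall, dist_zero_right]
    refine S.norm_le_of zero_le_one ?_ ?_
    · exact le_trans (S.neg_smul_unit_nonpos zero_le_one) (S.eff_nonneg (hEeff n))
    · rw [one_smul]; exact S.eff_le_unit (hEeff n)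
  obtain ⟨d, hdmem, φ, hφ, hφt⟩ := (isCompact_closedBall (0 : V) 1).tendsto_subseq hball
  have hdE : ∀ n, d ≤ E n := by
    intro n
    have ht : Tendsto (fun k => E (φ (k + n))) atTop (nhds d) :=
      hφt.comp (tendsto_add_atTop_nat n)
    refine S.le_of_tendsto_of_le ht (fun k => ?_)
    exact hAnti (le_trans (Nat.le_add_left n k) hφ.le_apply)
  have hEd : Tendsto E atTop (nhds d) := by
    rw [NormedAddCommGroup.tendsto_atTop]
    intro ε hε
    obtain ⟨K, hK⟩ := NormedAddCommGroup.tendsto_atTop.1 hφt (ε / 2) (by linarith)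
    refine ⟨φ K, fun n hn => ?_⟩
    have h1 : E n ≤ E (φ K) := hAnti hn
    have h2 : E (φ K) - d ≤ (ε / 2) • S.unit := (S.bounds_of_norm_lt (hK K le_rfl)).2
    have h3 : 0 ≤ E n - d := S.sub_nonneg_of_le (hdE n)
    have h4 : E n - d ≤ E (φ K) - d := by
      have := S.add_le_add_right' (E n) (E (φ K)) (-d) h1
      simpa [sub_eq_add_neg] using this
    have h5 : ‖E n - d‖ ≤ ε / 2 :=
      S.norm_le_of (by linarith) (le_trans (S.neg_smul_unit_nonpos (by linarith)) h3)
        (le_trans h4 h2)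
    linarith
  have hdeff : S.Eff d := (S.eff_iff d).2
    ⟨S.nonneg_of_tendsto hEd (fun n => S.eff_nonneg (hEeff n)),
      S.le_of_tendsto_of_le hEd (fun n => S.eff_le_unit (hEeff n))⟩
  have had : a ≤ d := S.ge_of_tendsto_of_ge hEd haE
  have hde : d ≤ e := le_trans (hdE 1) (le_of_eq hE1)
  have hed : S.seq e d = d := by
    have t1 := S.seq_tendsto2 he hEeff hdeff hEd
    have t2 : Tendsto (fun n => E (n + 1)) atTop (nhds d) :=
      hEd.comp (tendsto_add_atTop_nat 1)
    have heq : (fun n => S.seq e (E n)) = fun n => E (n + 1) :=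
      funext fun n => (hEsucc n).symm
    rw [heq] at t1
    exact tendsto_nhds_unique t1 t2
  have hcomEe : ∀ n, S.seq e (E n) = S.seq (E n) e := S.compat_iter he he rfl
  have hcomEb : ∀ n, S.seq b (E n) = S.seq (E n) b := S.compat_iter he hb hcbe
  have hEnd : ∀ n, S.seq (E n) d = d := by
    intro n
    induction n with
    | zero => exact S.s3 d hdeff
    | succ n ih =>
      rw [hEsucc, ← S.s5 e (E n) d he (hEeff n) hdeff (hcomEe n), ih, hed]
  have hdd : S.seq d d = d := by
    have t1 := S.seq_tendsto1 hdeff hEeff hdeff hEd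
    have heq : (fun n => S.seq (E n) d) = fun _ => d := funext fun n => hEnd n
    rw [heq] at t1
    exact tendsto_nhds_unique t1 tendsto_const_nhds
  have hgt : Tendsto (fun n => S.seq b (E n)) atTop (nhds (S.seq b d)) :=
    S.seq_tendsto2 hb hEeff hdeff hEd
  have hdb : S.seq d b = S.seq b d := by
    have t1 := S.seq_tendsto1 hb hEeff hdeff hEd
    have heq : (fun n => S.seq (E n) b) = fun n => S.seq b (E n) :=
      funext fun n => (hcomEb n).symm
    rw [heq] at t1
    exact tendsto_nhds_unique t1 hgt
  have hx_eff : S.Eff (S.seq b d) := S.seq_eff b d hb hdeff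
  have hxd : S.seq b d ≤ d := by
    rw [← hdb]; exact S.seq_le_fst hdeff hb
  have hbd_compl : b ≤ S.unit - d := by
    apply S.le_of_sub_nonneg
    have h7 : 0 ≤ e - d := S.sub_nonneg_of_le hde
    have h8 : S.unit - d - b = e - d := by rw [he_def]; abel
    rwa [h8]
  have hxcompl : S.seq b d ≤ S.unit - d := le_trans (S.seq_le_fst hb hdeff) hbd_compl
  have hbd0 : S.seq b d = 0 := S.sharp_of_idem hdeff hdd hx_eff hxd hxcompl
  have hcd : c ≤ d := hcmin d ⟨hdeff, hdd⟩ had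
  have h9 : S.seq b c ≤ 0 := by
    have := S.seq_mono2 hb hceff hdeff hcd
    rwa [hbd0] at this
  exact le_antisymm h9 (S.eff_nonneg (S.seq_eff b c hb hceff))
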